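/- The Choi map Λ: M_3(ℂ) → M_3(ℂ), Λ((a_{ij})) = (1/2)·[[a_{11}+a_{22}, −a_{12}, −a_{13}], [−a_{21}, a_{22}+a_{33}, −a_{23}], [−a_{31}, −a_{32}, a_{33}+a_{11}]], is not completely positive: the operator (Λ ⊗ id_{M_3})(|Ω⟩⟨Ω|), where |Ω⟩ = Σ_{i=0}^{2} |i⟩|i⟩, has a negative eigenvalue. -/

import Mathlib

noncomputable section

open scoped ComplexOrder

/-- The (normalized) Choi map `Λ : M_3(ℂ) → M_3(ℂ)` of Eq. (7). -/
def choiMap (A : Matrix (Fin 3) (Fin 3) ℂ) : Matrix (Fin 3) (Fin 3) ℂ :=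
  (2 : ℂ)⁻¹ • !![A 0 0 + A 1 1, -A 0 1, -A 0 2;
                 -A 1 0, A 1 1 + A 2 2, -A 1 2;
                 -A 2 0, -A 2 1, A 2 2 + A 0 0]

/-- The Choi matrix `(Λ ⊗ id)(|Ω⟩⟨Ω|)` of the Choi map, where `|Ω⟩ = Σ_i |i⟩|i⟩`:
its `((i,j),(k,l))` entry is `Λ(E_{ik})_{jl}` rearranged blockwise, i.e. the block `(i,j)`
of `Σ_{i,k} Λ(E_{ik}) ⊗ E_{ik}`. -/
def choiMatrix : Matrix (Fin 3 × Fin 3) (Fin 3 × Fin 3) ℂ :=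
  Matrix.of fun p q => choiMap (Matrix.single p.2 q.2 1) p.1 q.1

set_option maxHeartbeats 2000000 in
/-- The Choi matrix is Hermitian. -/
lemma choiMatrix_isHermitian : choiMatrix.IsHermitian := by
  ext ⟨i, j⟩ ⟨k, l⟩
  fin_cases i <;> fin_cases j <;> fin_cases k <;> fin_cases l <;>
    norm_num [choiMatrix, choiMap, Matrix.conjTranspose_apply, Matrix.single_apply,
      Fin.ext_iff, map_div₀, map_one, map_ofNat, apply_ite (starRingEnd ℂ), -Fin.val_eq_zero_iff]

set_option maxHeartbeats 2000000 in
/-- The Choi matrix is not positive semidefinite: with `v = |Ω⟩` we get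
`⟨Ω| C |Ω⟩ = -3/2 < 0`. -/
lemma choiMatrix_not_posSemidef : ¬ choiMatrix.PosSemidef := by
  intro h
  have := (Matrix.posSemidef_iff_dotProduct_mulVec.mp h).2 (fun p => if p.1 = p.2 then 1 else 0)
  rw [show (dotProduct (star fun p : Fin 3 × Fin 3 => if p.1 = p.2 then (1:ℂ) else 0)
      (choiMatrix.mulVec fun p => if p.1 = p.2 then 1 else 0)) = (-3/2 : ℂ) by
    simp only [dotProduct, Matrix.mulVec, Pi.star_apply, Fintype.sum_prod_type,
      Fin.sum_univ_three, choiMatrix, choiMap, Matrix.single_apply]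
    norm_num [Matrix.of_apply, Fin.ext_iff, -Fin.val_eq_zero_iff, Matrix.cons_val_two, Matrix.cons_val_succ]] at this
  norm_num [Complex.le_def] at this

/-- the Choi map is not completely positive: its Choi matrix
`(Λ ⊗ id)(|Ω⟩⟨Ω|)` has a negative eigenvalue. -/
theorem stmt10 :
    ∃ (h : choiMatrix.IsHermitian) (i : Fin 3 × Fin 3), h.eigenvalues i < 0 := by
  refine ⟨choiMatrix_isHermitian, ?_⟩
  by_contra hc
  push_neg at hc
  exact choiMatrix_not_posSemidef
    (choiMatrix_isHermitian.posSemidef_iff_eigenvalues_nonneg.mpr hc)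

end
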